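/- Let 𝐌 : Matrix (Fin p) (Fin q) K and let M : (Fin p) → (Fin q) → WithBot G be given by M i j := val (𝐌 i j). If M is tropically generic, then 𝐌 is generic, i.e., for every k and all injective maps r : Fin k → Fin p, c : Fin k → Fin q, the submatrix 𝐖 := (i, j) ↦ 𝐌 (r i) (c j) satisfies: det 𝐖 ≠ 0, or for every σ ∈ Equiv.Perm (Fin k) the product Π_i 𝐖 i (σ i) equals 0. -/

import Mathlib

noncomputable section
open scoped Classical

variable {G : Type*} [AddCommGroup G] [LinearOrder G] [IsOrderedAddMonoid G]

/-- The valuation `val : HahnSeries G ℝ → WithBot G`, with `val 𝐱 = -𝐱.order` for `𝐱 ≠ 0`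
and `val 0 = ⊥`. -/
def hahnVal (x : HahnSeries G ℝ) : WithBot G :=
  if x = 0 then ⊥ else ↑(-x.order)

/-- Tropical permanent of a square matrix over the max-plus semiring `WithBot G`:
`tper M = ⊔_σ Σ_i M i (σ i)`, sums taken in `WithBot G` (`⊥` is absorbing for `+`). -/
def tper {k : ℕ} (M : Matrix (Fin k) (Fin k) (WithBot G)) : WithBot G :=
  Finset.univ.sup (fun σ : Equiv.Perm (Fin k) => ∑ i, M i (σ i))

/-- A square matrix over `WithBot G` is tropically nonsingular if its tropical permanent is
not `⊥` and exactly one permutation attains the maximum. -/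
def TropNonsingular {k : ℕ} (M : Matrix (Fin k) (Fin k) (WithBot G)) : Prop :=
  tper M ≠ ⊥ ∧ ∃! σ : Equiv.Perm (Fin k), ∑ i, M i (σ i) = tper M

/-- A (rectangular) matrix over `WithBot G` is tropically generic if each of its square
submatrices is tropically nonsingular or has tropical permanent `⊥`. -/
def TropGeneric {p q : ℕ} (N : Fin p → Fin q → WithBot G) : Prop :=
  ∀ (k : ℕ) (r : Fin k → Fin p) (c : Fin k → Fin q),
    Function.Injective r → Function.Injective c →
      TropNonsingular (Matrix.of fun i j => N (r i) (c j)) ∨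
        tper (Matrix.of fun i j => N (r i) (c j)) = ⊥

lemma hahnVal_mul (x y : HahnSeries G ℝ) : hahnVal (x * y) = hahnVal x + hahnVal y := by
  unfold hahnVal
  by_cases hx : x = 0
  · simp [hx]
  by_cases hy : y = 0
  · simp [hy]
  rw [if_neg hx, if_neg hy, if_neg (mul_ne_zero hx hy), HahnSeries.order_mul hx hy,
    ← WithBot.coe_add, neg_add]

lemma hahnVal_prod {ι : Type*} (s : Finset ι) (f : ι → HahnSeries G ℝ) :
    hahnVal (∏ i ∈ s, f i) = ∑ i ∈ s, hahnVal (f i) := by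
  classical
  induction s using Finset.induction with
  | empty => simp [hahnVal, HahnSeries.order_one]
  | insert _ _ h ih => rw [Finset.prod_insert h, Finset.sum_insert h, hahnVal_mul, ih]

lemma sum_eq_bot_exists {ι : Type*} (s : Finset ι) (f : ι → WithBot G)
    (h : ∑ i ∈ s, f i = ⊥) : ∃ i ∈ s, f i = ⊥ := by
  classical
  induction s using Finset.induction with
  | empty => simp at h
  | insert _ _ hnot ih =>
    rw [Finset.sum_insert hnot, WithBot.add_eq_bot] at h
    rcases h with h | h
    · exact ⟨_, Finset.mem_insert_self _ _, h⟩
    · obtain ⟨i, hi, hf⟩ := ih h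
      exact ⟨i, Finset.mem_insert_of_mem hi, hf⟩


/-- If the matrix `M = val ∘ 𝐌` of valuations is tropically generic, then
`𝐌` is generic: every square submatrix `𝐖` of `𝐌` has `det 𝐖 ≠ 0`, or all the products
`Π_i 𝐖 i (σ i)` vanish. -/
theorem generic_of_tropically_generic (p q : ℕ)
    (MK : Fin p → Fin q → HahnSeries G ℝ)
    (M : Fin p → Fin q → WithBot G)
    (hM : ∀ i j, M i j = hahnVal (MK i j))
    (hgen : TropGeneric M) :
    ∀ (k : ℕ) (r : Fin k → Fin p) (c : Fin k → Fin q),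
      Function.Injective r → Function.Injective c →
        (Matrix.of fun i j => MK (r i) (c j)).det ≠ 0 ∨
          ∀ σ : Equiv.Perm (Fin k), ∏ i, MK (r i) (c (σ i)) = 0 := by
  intro k r c hr hc
  set V : Matrix (Fin k) (Fin k) (WithBot G) := Matrix.of fun i j => M (r i) (c j) with hV
  have hval : ∀ σ : Equiv.Perm (Fin k),
      hahnVal (∏ i, MK (r i) (c (σ i))) = ∑ i, V i (σ i) := by
    intro σ
    rw [hahnVal_prod]
    exact Finset.sum_congr rfl fun i _ => by simp [hV, hM]
  rcases hgen k r c hr hc with ⟨hne, σ₀, hσ₀, huniq⟩ | hbot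
  · -- tropically nonsingular: det ≠ 0
    left
    set W : Matrix (Fin k) (Fin k) (HahnSeries G ℝ) := Matrix.of fun i j => MK (r i) (c j)
    have hP0 : (∏ i, MK (r i) (c (σ₀ i))) ≠ 0 := by
      intro h0
      rw [← hσ₀, ← hval σ₀, h0] at hne
      exact hne (by simp [hahnVal])
    set g : G := (∏ i, MK (r i) (c (σ₀ i))).order with hg
    have htper : tper V = ↑(-g) := by
      rw [← hσ₀, ← hval σ₀, hahnVal, if_neg hP0]
    -- coefficient of other terms vanishes at g
    have hcoeff : ∀ σ : Equiv.Perm (Fin k), σ ≠ σ₀ →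
        (∏ i, MK (r i) (c (σ i))).coeff g = 0 := by
      intro σ hσ
      by_cases h0 : (∏ i, MK (r i) (c (σ i))) = 0
      · simp [h0]
      have hlt : (∑ i, V i (σ i)) < tper V := by
        refine lt_of_le_of_ne ?_ fun h => hσ (huniq σ h)
        exact Finset.le_sup (f := fun τ : Equiv.Perm (Fin k) => ∑ i, V i (τ i)) (Finset.mem_univ σ)
      rw [← hval σ, hahnVal, if_neg h0, htper, WithBot.coe_lt_coe, neg_lt_neg_iff] at hlt
      exact HahnSeries.coeff_eq_zero_of_lt_order hlt
    -- compute det via transpose expansion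
    have hdet : W.det = ∑ σ : Equiv.Perm (Fin k),
        Equiv.Perm.sign σ • ∏ i, MK (r i) (c (σ i)) := by
      rw [← Matrix.det_transpose, Matrix.det_apply]
      exact Finset.sum_congr rfl fun σ _ => rfl
    intro hdet0
    have hc0 : (W.det).coeff g = (Equiv.Perm.sign σ₀ : ℤ) •
        (∏ i, MK (r i) (c (σ₀ i))).coeff g := by
      rw [hdet]
      have : ((∑ σ : Equiv.Perm (Fin k),
          Equiv.Perm.sign σ • ∏ i, MK (r i) (c (σ i))).coeff g)
          = ∑ σ : Equiv.Perm (Fin k),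
            (Equiv.Perm.sign σ • ∏ i, MK (r i) (c (σ i))).coeff g := by
        exact map_sum (AddMonoidHom.mk' (fun x : HahnSeries G ℝ => x.coeff g)
          (fun a b => by simp [HahnSeries.coeff_add])) _ _
      rw [this]
      rw [Finset.sum_eq_single σ₀]
      · rcases Int.units_eq_one_or (Equiv.Perm.sign σ₀) with h | h <;> simp [h]
      · intro σ _ hσ
        rcases Int.units_eq_one_or (Equiv.Perm.sign σ) with h | h <;>
          simp [h, hcoeff σ hσ]
      · intro h; exact absurd (Finset.mem_univ σ₀) h
    rw [hdet0] at hc0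
    have := HahnSeries.coeff_order_eq_zero.not.mpr hP0
    rcases Int.units_eq_one_or (Equiv.Perm.sign σ₀) with h | h <;>
      rw [h] at hc0 <;> simp at hc0 <;> first
        | exact this (by simpa [hg] using hc0)
        | exact this (by simpa [hg] using hc0.symm)
  · -- tropical permanent is ⊥: all products vanish
    right
    intro σ
    have : ∑ i, V i (σ i) = ⊥ :=
      le_antisymm (hbot ▸ Finset.le_sup (f := fun τ : Equiv.Perm (Fin k) => ∑ i, V i (τ i)) (Finset.mem_univ σ)) bot_le
    obtain ⟨i, _, hi⟩ := sum_eq_bot_exists Finset.univ _ this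
    have : MK (r i) (c (σ i)) = 0 := by
      by_contra h0
      simp [hV, hM, hahnVal, h0] at hi
    exact Finset.prod_eq_zero (Finset.mem_univ i) this

end
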